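/- Let ρ be a state on Q^⊗n and let {P, I−P} and {P′, I−P′} be binary POVMs with ‖P′ − P‖_∞ ≤ δ. Then for all e ∈ [0,1] and c ≥ 0: Pr(N_{P′}/n ≥ e + 2δ + c) ≤ Pr(N_P/n ≥ e) + ξ(n, 2δ, c), where ξ(n,δ,c) := Σ_{i=⌈n(δ+c)⌉}^n C(n,i) δ^i (1−δ)^{n−i}. -/

import Mathlib

open Matrix BigOperators
open scoped ComplexOrder

/-- The product POVM element on `Q^⊗n` corresponding to outcome string `s`, where each
subsystem is measured with the binary POVM `{P, I − P}` (`s i = true` means `P`-outcome). -/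
noncomputable def povmProd {d n : ℕ} (P : Matrix (Fin d) (Fin d) ℂ) (s : Fin n → Bool) :
    Matrix (Fin n → Fin d) (Fin n → Fin d) ℂ :=
  Matrix.of fun x y => ∏ i, (if s i then P else (1 : Matrix (Fin d) (Fin d) ℂ) - P) (x i) (y i)

/-- `Pr(N_P / n ≥ e)`: the probability (via Born's rule) that, measuring each of the `n`
subsystems of `ρ` with `{P, I − P}`, the number of `P`-outcomes is at least `e·n`. -/
noncomputable def tailProb {d n : ℕ} (ρ : Matrix (Fin n → Fin d) (Fin n → Fin d) ℂ)
    (P : Matrix (Fin d) (Fin d) ℂ) (e : ℝ) : ℝ :=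
  ∑ s : Fin n → Bool,
    if e * n ≤ ((Finset.univ.filter fun i => s i = true).card : ℝ)
    then ((povmProd P s * ρ).trace).re else 0

/-- The operator norm `‖·‖_∞` of a matrix, i.e. the norm of the induced linear operator
on Euclidean space. -/
noncomputable def matOpNorm {d : ℕ} (P : Matrix (Fin d) (Fin d) ℂ) : ℝ :=
  ‖LinearMap.toContinuousLinearMap (Matrix.toEuclideanLin P)‖

/-- Upper tail `ξ(n, δ, c)` of the Binomial(n, δ) distribution, summed from `⌈n(δ+c)⌉` to `n`. -/
noncomputable def binTail (n : ℕ) (δ c : ℝ) : ℝ :=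
  ∑ i ∈ (Finset.range (n + 1)).filter (fun i : ℕ => (n : ℝ) * (δ + c) ≤ (i : ℝ)),
    (n.choose i : ℝ) * δ ^ i * (1 - δ) ^ (n - i)


noncomputable def binT (n : ℕ) (η : ℝ) (m : ℝ) : ℝ :=
  ∑ i ∈ (Finset.range (n + 1)).filter (fun i : ℕ => m ≤ (i : ℝ)),
    (n.choose i : ℝ) * η ^ i * (1 - η) ^ (n - i)

lemma binT_eq (n : ℕ) (η m : ℝ) :
    binT n η m = ∑ i ∈ Finset.range (n + 1),
      (if m ≤ (i : ℝ) then (n.choose i : ℝ) * η ^ i * (1 - η) ^ (n - i) else 0) := by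
  rw [binT, Finset.sum_filter]

lemma binT_rec (n : ℕ) (η m : ℝ) :
    binT (n+1) η m = η * binT n η (m - 1) + (1 - η) * binT n η m := by
  set g : ℕ → ℝ := fun i => if m ≤ (i:ℝ) then (n.choose i : ℝ) * η ^ i * (1 - η) ^ (n + 1 - i) else 0 with hg
  set h : ℕ → ℝ := fun i => if m ≤ (i:ℝ) + 1 then (n.choose i : ℝ) * η ^ (i+1) * (1 - η) ^ (n - i) else 0 with hh
  have c2 : η * binT n η (m - 1) = ∑ i ∈ Finset.range (n+1), h i := by
    rw [binT_eq, Finset.mul_sum]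
    refine Finset.sum_congr rfl fun i _ => ?_
    simp only [hh]
    have hiff : (m - 1 ≤ (i:ℝ)) ↔ (m ≤ (i:ℝ) + 1) := by constructor <;> intro <;> linarith
    by_cases hcase : m ≤ (i:ℝ) + 1
    · rw [if_pos (hiff.mpr hcase), if_pos hcase]; ring
    · rw [if_neg (fun hx => hcase (hiff.mp hx)), if_neg hcase]; ring
  have c1 : (1 - η) * binT n η m = ∑ i ∈ Finset.range (n+1), g i := by
    rw [binT_eq, Finset.mul_sum]
    refine Finset.sum_congr rfl fun i hi => ?_
    simp only [hg]
    rw [Finset.mem_range] at hi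
    rw [show n + 1 - i = (n - i) + 1 by omega]
    split <;> ring
  rw [c1, c2, binT_eq]
  have key : ∀ i, (if m ≤ ((i+1:ℕ):ℝ) then ((n+1).choose (i+1) : ℝ) * η ^ (i+1) * (1 - η) ^ (n + 1 - (i+1)) else 0)
      = h i + g (i+1) := by
    intro i
    simp only [hh, hg, Nat.choose_succ_succ, Nat.cast_add, Nat.cast_succ]
    rw [show n + 1 - (i+1) = n - i by omega]
    split <;> ring
  rw [Finset.sum_range_succ' (fun i => if m ≤ ((i:ℕ):ℝ) then ((n+1).choose i : ℝ) * η ^ i * (1 - η) ^ (n + 1 - i) else 0) (n+1)]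
  simp only [key]
  rw [Finset.sum_add_distrib]
  have : ∑ i ∈ Finset.range (n+1), g (i+1) + (if m ≤ ((0:ℕ):ℝ) then ((n+1).choose 0 : ℝ) * η ^ 0 * (1 - η) ^ (n + 1 - 0) else 0)
      = ∑ i ∈ Finset.range (n+1), g i := by
    have e1 : (if m ≤ ((0:ℕ):ℝ) then ((n+1).choose 0 : ℝ) * η ^ 0 * (1 - η) ^ (n + 1 - 0) else 0) = g 0 := by
      simp [hg]
    rw [e1, ← Finset.sum_range_succ' g (n+1), Finset.sum_range_succ g (n+1)]
    have : g (n+1) = 0 := by simp [hg, Nat.choose_succ_self]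
    rw [this, add_zero]
  linarith [this]

lemma cnt_cons {n : ℕ} (b : Bool) (u : Fin n → Bool) :
    ((Finset.univ.filter fun i => (Fin.cons b u : Fin (n+1) → Bool) i = true).card)
      = (if b then 1 else 0) + (Finset.univ.filter fun i => u i = true).card := by
  rw [Finset.card_filter, Finset.card_filter, Fin.sum_univ_succ]
  simp [Fin.cons_succ, Fin.cons_zero]

lemma reidx {n : ℕ} (F : (Fin (n+1) → Bool) → ℝ) :
    (∑ s, F s) = ∑ u : Fin n → Bool, (F (Fin.cons true u) + F (Fin.cons false u)) := by
  rw [← Equiv.sum_comp (Fin.consEquiv (fun _ : Fin (n+1) => Bool)) F, Fintype.sum_prod_type,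
    Fintype.sum_bool, ← Finset.sum_add_distrib]
  simp [Fin.consEquiv]

theorem binDom : ∀ (n : ℕ) (q : (Fin n → Bool) → ℝ) (η : ℝ), 0 ≤ η → η ≤ 1 →
    (∀ s, 0 ≤ q s) →
    (∀ (j : Fin n) (s : Fin n → Bool), q (Function.update s j true)
      ≤ η * (q (Function.update s j true) + q (Function.update s j false))) →
    ∀ m : ℝ, (∑ s : Fin n → Bool, if m ≤ ((Finset.univ.filter fun i => s i = true).card : ℝ) then q s else 0)
      ≤ (∑ s, q s) * binT n η m := by
  intro n
  induction n with
  | zero =>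
    intro q η hη0 hη1 hq hA m
    have hsingle : ∀ F : (Fin 0 → Bool) → ℝ, (∑ s, F s) = F (fun i => i.elim0) := by
      intro F
      exact Fintype.sum_unique F
    rw [hsingle, hsingle]
    have hbt : binT 0 η m = if m ≤ (0:ℝ) then 1 else 0 := by
      simp [binT, Finset.sum_filter]
    rw [hbt]
    simp only [Finset.filter_eq_empty_iff.mpr (by simp : ∀ i ∈ (Finset.univ : Finset (Fin 0)), ¬((fun i : Fin 0 => i.elim0) i = true))]
    by_cases hm : m ≤ (0:ℝ)
    · simp [hm]
    · simp [hm, Finset.card_empty]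
  | succ n ih =>
    intro q η hη0 hη1 hq hA m
    set q' : (Fin n → Bool) → ℝ := fun u => q (Fin.cons true u) + q (Fin.cons false u) with hq'
    have hq'0 : ∀ u, 0 ≤ q' u := fun u => add_nonneg (hq _) (hq _)
    have hA' : ∀ (j : Fin n) (u : Fin n → Bool), q' (Function.update u j true)
        ≤ η * (q' (Function.update u j true) + q' (Function.update u j false)) := by
      intro j u
      simp only [hq', ← Fin.cons_update]
      have h1 := hA j.succ (Fin.cons true u)
      have h2 := hA j.succ (Fin.cons false u)
      rw [← Fin.cons_update, ← Fin.cons_update] at h1 h2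
      linarith
    have hfirst : ∀ u, q (Fin.cons true u) ≤ η * q' u := by
      intro u
      have h := hA 0 (Fin.cons true u)
      rw [Fin.update_cons_zero, Fin.update_cons_zero] at h
      simpa [hq'] using h
    have key : ∀ u : Fin n → Bool,
        ((if m ≤ ((Finset.univ.filter fun i => (Fin.cons true u : Fin (n+1) → Bool) i = true).card : ℝ) then q (Fin.cons true u) else 0)
          + (if m ≤ ((Finset.univ.filter fun i => (Fin.cons false u : Fin (n+1) → Bool) i = true).card : ℝ) then q (Fin.cons false u) else 0))
        ≤ η * (if m - 1 ≤ ((Finset.univ.filter fun i => u i = true).card : ℝ) then q' u else 0)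
          + (1-η) * (if m ≤ ((Finset.univ.filter fun i => u i = true).card : ℝ) then q' u else 0) := by
      intro u
      rw [cnt_cons true u, cnt_cons false u]
      norm_num
      set k : ℝ := ((Finset.univ.filter fun i => u i = true).card : ℝ) with hk
      have he : q' u = q (Fin.cons true u) + q (Fin.cons false u) := rfl
      split_ifs with h1 h2 h3 h4 h5 h6 <;>
        nlinarith [hfirst u, hq (Fin.cons true u), hq (Fin.cons false u), he, hη0, hη1]
    calc (∑ s : Fin (n+1) → Bool, if m ≤ ((Finset.univ.filter fun i => s i = true).card : ℝ) then q s else 0)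
        = ∑ u : Fin n → Bool,
          ((if m ≤ ((Finset.univ.filter fun i => (Fin.cons true u : Fin (n+1) → Bool) i = true).card : ℝ) then q (Fin.cons true u) else 0)
          + (if m ≤ ((Finset.univ.filter fun i => (Fin.cons false u : Fin (n+1) → Bool) i = true).card : ℝ) then q (Fin.cons false u) else 0)) :=
          reidx _
      _ ≤ ∑ u : Fin n → Bool,
          (η * (if m - 1 ≤ ((Finset.univ.filter fun i => u i = true).card : ℝ) then q' u else 0)
          + (1-η) * (if m ≤ ((Finset.univ.filter fun i => u i = true).card : ℝ) then q' u else 0)) :=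
          Finset.sum_le_sum fun u _ => key u
      _ = η * (∑ u : Fin n → Bool, if m - 1 ≤ ((Finset.univ.filter fun i => u i = true).card : ℝ) then q' u else 0)
          + (1-η) * (∑ u : Fin n → Bool, if m ≤ ((Finset.univ.filter fun i => u i = true).card : ℝ) then q' u else 0) := by
          rw [Finset.sum_add_distrib, Finset.mul_sum, Finset.mul_sum]
      _ ≤ η * ((∑ u, q' u) * binT n η (m-1)) + (1-η) * ((∑ u, q' u) * binT n η m) := by
          have h1 := ih q' η hη0 hη1 hq'0 hA' (m-1)
          have h2 := ih q' η hη0 hη1 hq'0 hA' m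
          have := mul_le_mul_of_nonneg_left h1 hη0
          have := mul_le_mul_of_nonneg_left h2 (by linarith : (0:ℝ) ≤ 1 - η)
          linarith
      _ = (∑ s, q s) * binT (n+1) η m := by
          rw [binT_rec, reidx q]
          simp only [hq']
          ring

variable {d n : ℕ}

open scoped MatrixOrder in
lemma psd_eq_ct_mul_self {m : Type*} [Fintype m] [DecidableEq m] {M : Matrix m m ℂ}
    (hM : M.PosSemidef) : ∃ B : Matrix m m ℂ, M = Bᴴ * B := by
  obtain ⟨B, hB⟩ := CStarAlgebra.nonneg_iff_eq_star_mul_self.mp hM.nonneg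
  exact ⟨B, hB⟩

noncomputable def sitesProd {d n : ℕ} (A : Fin n → Matrix (Fin d) (Fin d) ℂ) :
    Matrix (Fin n → Fin d) (Fin n → Fin d) ℂ :=
  Matrix.of fun x y => ∏ i, A i (x i) (y i)

lemma sitesProd_psd (A : Fin n → Matrix (Fin d) (Fin d) ℂ) (hA : ∀ i, (A i).PosSemidef) :
    (sitesProd A).PosSemidef := by
  choose B hB using fun i => (psd_eq_ct_mul_self (hA i))
  have key : sitesProd A = (sitesProd B)ᴴ * sitesProd B := by
    ext x y
    simp only [sitesProd, Matrix.mul_apply, Matrix.conjTranspose_apply, Matrix.of_apply]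
    calc ∏ i, A i (x i) (y i) = ∏ i, ((B i)ᴴ * B i) (x i) (y i) := by
          refine Finset.prod_congr rfl fun i _ => ?_; rw [← hB i]
      _ = ∏ i, ∑ w : Fin d, star (B i w (x i)) * B i w (y i) := by
          refine Finset.prod_congr rfl fun i _ => ?_
          simp [Matrix.mul_apply, Matrix.conjTranspose_apply]
      _ = ∑ z : Fin n → Fin d, ∏ i, star (B i (z i) (x i)) * B i (z i) (y i) :=
          Fintype.prod_sum _
      _ = ∑ z : Fin n → Fin d, star (∏ i, B i (z i) (x i)) * ∏ i, B i (z i) (y i) := by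
          refine Finset.sum_congr rfl fun z _ => ?_
          rw [star_prod, Finset.prod_mul_distrib]
  rw [key]
  exact Matrix.posSemidef_conjTranspose_mul_self _

lemma psd_trace_re_nonneg {m : Type*} [Fintype m] [DecidableEq m] (M : Matrix m m ℂ) (hM : M.PosSemidef) :
    0 ≤ M.trace.re := by
  have h : ∀ i, 0 ≤ (M i i).re := by
    intro i
    have h := hM.re_dotProduct_nonneg (Pi.single i 1)
    simpa [dotProduct, Pi.single_apply, Finset.sum_ite_eq, Matrix.mulVec] using h
  rw [Matrix.trace, Complex.re_sum]
  exact Finset.sum_nonneg fun i _ => h i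

lemma trace_mul_re_nonneg {m : Type*} [Fintype m] [DecidableEq m] (M ρ : Matrix m m ℂ)
    (hM : M.PosSemidef) (hρ : ρ.PosSemidef) : 0 ≤ ((M * ρ).trace).re := by
  obtain ⟨B, rfl⟩ := psd_eq_ct_mul_self hM
  rw [← Matrix.trace_mul_cycle]
  exact psd_trace_re_nonneg _ (hρ.mul_mul_conjTranspose_same B)

lemma sitesProd_update_entry (A : Fin n → Matrix (Fin d) (Fin d) ℂ) (j : Fin n)
    (Z : Matrix (Fin d) (Fin d) ℂ) (x y : Fin n → Fin d) :
    sitesProd (Function.update A j Z) x y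
      = Z (x j) (y j) * ∏ i ∈ Finset.univ \ {j}, A i (x i) (y i) := by
  have h : (fun i => (Function.update A j Z) i (x i) (y i))
      = Function.update (fun i => A i (x i) (y i)) j (Z (x j) (y j)) := by
    funext i
    rcases eq_or_ne i j with rfl | hne
    · simp
    · simp [Function.update_of_ne hne]
  calc sitesProd (Function.update A j Z) x y
      = ∏ i, (Function.update A j Z) i (x i) (y i) := rfl
    _ = ∏ i, Function.update (fun i => A i (x i) (y i)) j (Z (x j) (y j)) i := by rw [h]
    _ = Z (x j) (y j) * ∏ i ∈ Finset.univ \ {j}, A i (x i) (y i) :=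
      Finset.prod_update_of_mem (Finset.mem_univ j) _ _

lemma sitesProd_update_add (A : Fin n → Matrix (Fin d) (Fin d) ℂ) (j : Fin n)
    (X Y : Matrix (Fin d) (Fin d) ℂ) :
    sitesProd (Function.update A j (X + Y))
      = sitesProd (Function.update A j X) + sitesProd (Function.update A j Y) := by
  ext x y
  simp [sitesProd_update_entry, Matrix.add_apply, add_mul]

lemma sitesProd_update_smul (A : Fin n → Matrix (Fin d) (Fin d) ℂ) (j : Fin n)
    (c : ℂ) (X : Matrix (Fin d) (Fin d) ℂ) :
    sitesProd (Function.update A j (c • X)) = c • sitesProd (Function.update A j X) := by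
  ext x y
  simp [sitesProd_update_entry, Matrix.smul_apply, smul_eq_mul, mul_assoc]

lemma sitesProd_expand3 (E : Fin 3 → Matrix (Fin d) (Fin d) ℂ) (g : Fin 3 → Bool)
    (s : Fin n → Bool) :
    sitesProd (fun i => ∑ j ∈ Finset.univ.filter (fun j => g j = s i), E j)
      = ∑ t ∈ Finset.univ.filter (fun t : Fin n → Fin 3 => (fun i => g (t i)) = s),
          sitesProd (fun i => E (t i)) := by
  have hset : Fintype.piFinset (fun i => Finset.univ.filter (fun j => g j = s i))
      = Finset.univ.filter (fun t : Fin n → Fin 3 => (fun i => g (t i)) = s) := by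
    ext t
    simp [Fintype.mem_piFinset, funext_iff]
  ext x y
  rw [Matrix.sum_apply]
  calc sitesProd (fun i => ∑ j ∈ Finset.univ.filter (fun j => g j = s i), E j) x y
      = ∏ i, ∑ j ∈ Finset.univ.filter (fun j => g j = s i), E j (x i) (y i) := by
        simp [sitesProd, Matrix.sum_apply]
    _ = ∑ t ∈ Fintype.piFinset (fun i => Finset.univ.filter (fun j => g j = s i)),
          ∏ i, E (t i) (x i) (y i) := Finset.prod_univ_sum _ _
    _ = ∑ t ∈ Finset.univ.filter (fun t : Fin n → Fin 3 => (fun i => g (t i)) = s),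
          sitesProd (fun i => E (t i)) x y := by rw [hset]; rfl

lemma sitesProd_pair_total (X Y : Matrix (Fin d) (Fin d) ℂ) :
    ∑ s : Fin n → Bool, sitesProd (fun i => if s i then X else Y)
      = sitesProd (fun _ : Fin n => X + Y) := by
  ext x y
  rw [Matrix.sum_apply]
  calc ∑ s : Fin n → Bool, sitesProd (fun i => if s i then X else Y) x y
      = ∑ s : Fin n → Bool, ∏ i, (if s i then X else Y) (x i) (y i) := rfl
    _ = ∏ i, ∑ b ∈ (Finset.univ : Finset Bool), (if b then X else Y) (x i) (y i) := by
        rw [Finset.prod_univ_sum]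
        rw [Fintype.piFinset_univ]
    _ = sitesProd (fun _ : Fin n => X + Y) x y := by
        simp [sitesProd, Fintype.sum_bool, Matrix.add_apply]

lemma sitesProd_one : sitesProd (fun _ : Fin n => (1 : Matrix (Fin d) (Fin d) ℂ)) = 1 := by
  ext x y
  simp only [sitesProd, Matrix.of_apply, Matrix.one_apply]
  rw [Finset.prod_boole]
  simp [funext_iff, eq_comm]

lemma expand3_trace (ρ : Matrix (Fin n → Fin d) (Fin n → Fin d) ℂ)
    (E : Fin 3 → Matrix (Fin d) (Fin d) ℂ) (g : Fin 3 → Bool) (m : ℝ) :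
    (∑ s : Fin n → Bool, if m ≤ ((Finset.univ.filter fun i => s i = true).card : ℝ)
      then (((sitesProd fun i => ∑ j ∈ Finset.univ.filter (fun j => g j = s i), E j) * ρ).trace).re else 0)
    = ∑ t : Fin n → Fin 3, if m ≤ ((Finset.univ.filter fun i => g (t i) = true).card : ℝ)
        then ((sitesProd (fun i => E (t i)) * ρ).trace).re else 0 := by
  have step1 : ∀ s : Fin n → Bool,
      (if m ≤ ((Finset.univ.filter fun i => s i = true).card : ℝ)
        then (((sitesProd fun i => ∑ j ∈ Finset.univ.filter (fun j => g j = s i), E j) * ρ).trace).re else 0)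
      = ∑ t ∈ Finset.univ.filter (fun t : Fin n → Fin 3 => (fun i => g (t i)) = s),
          (if m ≤ ((Finset.univ.filter fun i => g (t i) = true).card : ℝ)
            then ((sitesProd (fun i => E (t i)) * ρ).trace).re else 0) := by
    intro s
    have e2 : ∀ t ∈ Finset.univ.filter (fun t : Fin n → Fin 3 => (fun i => g (t i)) = s),
        (if m ≤ ((Finset.univ.filter fun i => g (t i) = true).card : ℝ)
          then ((sitesProd (fun i => E (t i)) * ρ).trace).re else 0)
        = (if m ≤ ((Finset.univ.filter fun i => s i = true).card : ℝ)
          then ((sitesProd (fun i => E (t i)) * ρ).trace).re else 0) := by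
      intro t ht
      have hts := (Finset.mem_filter.mp ht).2
      have h2 : ∀ i, g (t i) = s i := fun i => congrFun hts i
      simp only [h2]
    rw [Finset.sum_congr rfl e2]
    split
    · rw [sitesProd_expand3, Matrix.sum_mul, Matrix.trace_sum, Complex.re_sum]
    · rw [Finset.sum_const_zero]
  rw [Finset.sum_congr rfl (fun s _ => step1 s)]
  exact Finset.sum_fiberwise Finset.univ (fun t : Fin n → Fin 3 => (fun i => g (t i)))
    (fun t => if m ≤ ((Finset.univ.filter fun i => g (t i) = true).card : ℝ)
      then ((sitesProd (fun i => E (t i)) * ρ).trace).re else 0)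


set_option synthInstance.maxHeartbeats 1000000 in
set_option maxHeartbeats 1000000 in
lemma dot_bound (X : Matrix (Fin d) (Fin d) ℂ) (η : ℝ) (hn : matOpNorm X ≤ η)
    (v : Fin d → ℂ) :
    ‖dotProduct (star v) (X *ᵥ v)‖
      ≤ η * ((dotProduct (star v) v).re) := by
  set w : EuclideanSpace ℂ (Fin d) := (WithLp.equiv 2 _).symm v with hw
  have h1 : dotProduct (star v) (X *ᵥ v) = inner ℂ w (Matrix.toEuclideanLin X w) := by
    rw [hw]; exact dotProduct_comm _ _
  have h2 : (dotProduct (star v) v).re = ‖w‖ ^ 2 := by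
    have : dotProduct (star v) v = inner ℂ w w := by
      rw [hw]; exact dotProduct_comm _ _
    rw [this]
    exact inner_self_eq_norm_sq (𝕜 := ℂ) w
  rw [h1, h2]
  have h3 : ‖(inner ℂ w (Matrix.toEuclideanLin X w) : ℂ)‖ ≤ ‖w‖ * ‖Matrix.toEuclideanLin X w‖ :=
    norm_inner_le_norm _ _
  have h4 : ‖Matrix.toEuclideanLin X w‖ ≤ matOpNorm X * ‖w‖ := by
    rw [matOpNorm]
    have h := ContinuousLinearMap.le_opNorm
      (LinearMap.toContinuousLinearMap (Matrix.toEuclideanLin X)) w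
    simpa using h
  have h5 : (0:ℝ) ≤ ‖w‖ := norm_nonneg w
  have h6 : (0:ℝ) ≤ η := le_trans (norm_nonneg _) hn
  calc ‖(inner ℂ w (Matrix.toEuclideanLin X w) : ℂ)‖
      = ‖(inner ℂ w (Matrix.toEuclideanLin X w) : ℂ)‖ := rfl
    _ ≤ ‖w‖ * ‖Matrix.toEuclideanLin X w‖ := h3
    _ ≤ ‖w‖ * (matOpNorm X * ‖w‖) := by nlinarith
    _ ≤ η * ‖w‖ ^ 2 := by nlinarith

lemma psd_affine (X : Matrix (Fin d) (Fin d) ℂ) (hX : X.IsHermitian) (η a b : ℝ)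
    (hn : matOpNorm X ≤ η) (hb : |b| * η ≤ a) :
      (((a : ℝ) : ℂ) • (1 : Matrix (Fin d) (Fin d) ℂ) + ((b : ℝ) : ℂ) • X).PosSemidef := by
  refine Matrix.PosSemidef.of_dotProduct_mulVec_nonneg ?_ ?_
  · apply Matrix.IsHermitian.add
    · simp [Matrix.IsHermitian, Matrix.conjTranspose_smul, Complex.star_def,
        Complex.conj_ofReal]
    · simp [Matrix.IsHermitian, Matrix.conjTranspose_smul, Complex.star_def,
        Complex.conj_ofReal, hX.eq]
  · intro x
    have hform : dotProduct (star x) ((((a : ℝ) : ℂ) • (1 : Matrix (Fin d) (Fin d) ℂ)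
        + ((b : ℝ) : ℂ) • X) *ᵥ x)
        = ((a : ℝ) : ℂ) * dotProduct (star x) x
          + ((b : ℝ) : ℂ) * dotProduct (star x) (X *ᵥ x) := by
      rw [Matrix.add_mulVec, dotProduct_add, Matrix.smul_mulVec,
        Matrix.smul_mulVec, Matrix.one_mulVec, dotProduct_smul,
        dotProduct_smul, smul_eq_mul, smul_eq_mul]
    set z := dotProduct (star x) (X *ᵥ x) with hz
    set s := dotProduct (star x) x with hs
    have hzstar : star z = z := by
      rw [hz]
      conv_rhs => rw [Matrix.star_dotProduct]
      rw [Matrix.star_mulVec, hX.eq, ← Matrix.dotProduct_mulVec]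
    have hzim : z.im = 0 := by
      have h := congrArg Complex.im hzstar
      simp only [Complex.star_def, Complex.conj_im] at h
      linarith
    have hsnn : (0:ℂ) ≤ s := dotProduct_star_self_nonneg x
    obtain ⟨hsre, hsim0⟩ := Complex.nonneg_iff.mp hsnn
    have hsim : s.im = 0 := hsim0.symm
    have habs : |z.re| ≤ η * s.re := by
      have h := dot_bound X η hn x
      rw [← hz, ← hs] at h
      have h2 : |z.re| ≤ ‖z‖ := Complex.abs_re_le_norm z
      linarith
    rw [hform]
    rw [Complex.nonneg_iff]
    have hη : (0:ℝ) ≤ η := le_trans (norm_nonneg _) hn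
    constructor
    · simp only [Complex.add_re, Complex.mul_re, Complex.ofReal_re, Complex.ofReal_im,
        hzim, hsim, mul_zero, zero_mul, sub_zero]
      have key : |b * z.re| ≤ a * s.re := by
        rw [abs_mul]
        calc |b| * |z.re| ≤ |b| * (η * s.re) :=
              mul_le_mul_of_nonneg_left habs (abs_nonneg b)
          _ = (|b| * η) * s.re := by ring
          _ ≤ a * s.re := mul_le_mul_of_nonneg_right hb hsre
      have h3 := neg_abs_le (b * z.re)
      linarith
    · simp [Complex.add_im, Complex.mul_im, Complex.ofReal_im, hzim, hsim]

lemma bool_to3 (ρ : Matrix (Fin n → Fin d) (Fin n → Fin d) ℂ)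
    (E : Fin 3 → Matrix (Fin d) (Fin d) ℂ) (g : Fin 3 → Bool)
    (B C : Matrix (Fin d) (Fin d) ℂ)
    (hB : ∀ b : Bool, (∑ j ∈ Finset.univ.filter (fun j => g j = b), E j)
      = (if b then B else C)) (m : ℝ) :
    (∑ s : Fin n → Bool, if m ≤ ((Finset.univ.filter fun i => s i = true).card : ℝ)
      then ((sitesProd (fun i => if s i then B else C) * ρ).trace).re else 0)
    = ∑ t : Fin n → Fin 3, if m ≤ ((Finset.univ.filter fun i => g (t i) = true).card : ℝ)
        then ((sitesProd (fun i => E (t i)) * ρ).trace).re else 0 := by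
  rw [← expand3_trace ρ E g m]
  refine Finset.sum_congr rfl fun s _ => ?_
  have h : (fun i => ∑ j ∈ Finset.univ.filter (fun j => g j = s i), E j)
      = fun i => if s i then B else C := funext fun i => hB (s i)
  rw [h]

lemma r3_nonneg (ρ : Matrix (Fin n → Fin d) (Fin n → Fin d) ℂ) (hρ : ρ.PosSemidef)
    (E : Fin 3 → Matrix (Fin d) (Fin d) ℂ) (hE : ∀ j, (E j).PosSemidef)
    (t : Fin n → Fin 3) : 0 ≤ ((sitesProd (fun i => E (t i)) * ρ).trace).re :=
  trace_mul_re_nonneg _ _ (sitesProd_psd _ fun i => hE (t i)) hρ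

lemma count_mono_tail (ρ : Matrix (Fin n → Fin d) (Fin n → Fin d) ℂ) (hρ : ρ.PosSemidef)
    (E : Fin 3 → Matrix (Fin d) (Fin d) ℂ) (hE : ∀ j, (E j).PosSemidef)
    (g g' : Fin 3 → Bool) (hgg : ∀ j, g j = true → g' j = true) (m : ℝ) :
    (∑ t : Fin n → Fin 3, if m ≤ ((Finset.univ.filter fun i => g (t i) = true).card : ℝ)
        then ((sitesProd (fun i => E (t i)) * ρ).trace).re else 0)
    ≤ ∑ t : Fin n → Fin 3, if m ≤ ((Finset.univ.filter fun i => g' (t i) = true).card : ℝ)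
        then ((sitesProd (fun i => E (t i)) * ρ).trace).re else 0 := by
  refine Finset.sum_le_sum fun t _ => ?_
  have hcard : ((Finset.univ.filter fun i => g (t i) = true).card : ℝ)
      ≤ ((Finset.univ.filter fun i => g' (t i) = true).card : ℝ) := by
    exact_mod_cast Finset.card_le_card
      (Finset.monotone_filter_right _ (fun i _ h => hgg (t i) h))
  split
  · rw [if_pos (by linarith)]
  · split
    · exact r3_nonneg ρ hρ E hE t
    · exact le_refl 0

lemma split_tail (ρ : Matrix (Fin n → Fin d) (Fin n → Fin d) ℂ) (hρ : ρ.PosSemidef)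
    (E : Fin 3 → Matrix (Fin d) (Fin d) ℂ) (hE : ∀ j, (E j).PosSemidef) (m1 m2 : ℝ) :
    (∑ t : Fin n → Fin 3,
      if m1 + m2 ≤ ((Finset.univ.filter fun i => (![true,true,false] : Fin 3 → Bool) (t i) = true).card : ℝ)
        then ((sitesProd (fun i => E (t i)) * ρ).trace).re else 0)
    ≤ (∑ t : Fin n → Fin 3,
        if m1 ≤ ((Finset.univ.filter fun i => (![true,false,false] : Fin 3 → Bool) (t i) = true).card : ℝ)
          then ((sitesProd (fun i => E (t i)) * ρ).trace).re else 0)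
      + ∑ t : Fin n → Fin 3,
        if m2 ≤ ((Finset.univ.filter fun i => (![false,true,false] : Fin 3 → Bool) (t i) = true).card : ℝ)
          then ((sitesProd (fun i => E (t i)) * ρ).trace).re else 0 := by
  rw [← Finset.sum_add_distrib]
  refine Finset.sum_le_sum fun t _ => ?_
  have hr := r3_nonneg ρ hρ E hE t
  have hcnt : ((Finset.univ.filter fun i => (![true,true,false] : Fin 3 → Bool) (t i) = true).card : ℝ)
      ≤ ((Finset.univ.filter fun i => (![true,false,false] : Fin 3 → Bool) (t i) = true).card : ℝ)
      + ((Finset.univ.filter fun i => (![false,true,false] : Fin 3 → Bool) (t i) = true).card : ℝ) := by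
    have h : ((Finset.univ.filter fun i => (![true,true,false] : Fin 3 → Bool) (t i) = true).card : ℕ)
        ≤ ((Finset.univ.filter fun i => (![true,false,false] : Fin 3 → Bool) (t i) = true).card : ℕ)
        + ((Finset.univ.filter fun i => (![false,true,false] : Fin 3 → Bool) (t i) = true).card : ℕ) := by
      rw [Finset.card_filter, Finset.card_filter, Finset.card_filter, ← Finset.sum_add_distrib]
      refine Finset.sum_le_sum fun i _ => ?_
      have hj : ∀ j : Fin 3, (if (![true,true,false] : Fin 3 → Bool) j = true then (1:ℕ) else 0)
          ≤ (if (![true,false,false] : Fin 3 → Bool) j = true then 1 else 0)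
            + (if (![false,true,false] : Fin 3 → Bool) j = true then 1 else 0) := by decide
      exact hj (t i)
    exact_mod_cast h
  split_ifs with h1 h2 h3 h4 h5 <;> linarith

lemma condA (ρ : Matrix (Fin n → Fin d) (Fin n → Fin d) ℂ) (hρ : ρ.PosSemidef)
    (R : Matrix (Fin d) (Fin d) ℂ) (hR : R.PosSemidef)
    (hRc : ((1:Matrix (Fin d) (Fin d) ℂ) - R).PosSemidef)
    (η : ℝ) (hη : (((η:ℝ):ℂ) • (1:Matrix (Fin d) (Fin d) ℂ) - R).PosSemidef)
    (j : Fin n) (s : Fin n → Bool) :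
    ((sitesProd (fun i => if (Function.update s j true) i then R else 1 - R) * ρ).trace).re
    ≤ η * (((sitesProd (fun i => if (Function.update s j true) i then R else 1 - R) * ρ).trace).re
        + ((sitesProd (fun i => if (Function.update s j false) i then R else 1 - R) * ρ).trace).re) := by
  set C : Fin n → Matrix (Fin d) (Fin d) ℂ := fun i => if s i then R else 1 - R with hC
  have hupd : ∀ b : Bool, (fun i => if (Function.update s j b) i then R else 1 - R)
      = Function.update C j (if b then R else 1 - R) := by
    intro b
    funext i
    rcases eq_or_ne i j with rfl | hne
    · simp
    · simp [Function.update_of_ne hne, hC]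
  have t1 : (if (true:Bool) = true then R else 1 - R) = R := rfl
  have t2 : (if (false:Bool) = true then R else 1 - R) = 1 - R := rfl
  rw [hupd true, hupd false, t1, t2]
  have hsum : sitesProd (Function.update C j R) + sitesProd (Function.update C j (1 - R))
      = sitesProd (Function.update C j 1) := by
    rw [← sitesProd_update_add]
    congr 1
    rw [add_sub_cancel]
  have hsmul : sitesProd (Function.update C j (((η:ℝ):ℂ) • 1))
      = ((η:ℝ):ℂ) • sitesProd (Function.update C j 1) := sitesProd_update_smul C j _ 1
  have hdiff : sitesProd (Function.update C j (((η:ℝ):ℂ) • 1))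
      = sitesProd (Function.update C j ((((η:ℝ):ℂ) • 1) - R)) + sitesProd (Function.update C j R) := by
    rw [← sitesProd_update_add]
    congr 1
    rw [sub_add_cancel]
  have hpsd : (sitesProd (Function.update C j ((((η:ℝ):ℂ) • 1) - R))).PosSemidef := by
    refine sitesProd_psd _ fun i => ?_
    rcases eq_or_ne i j with rfl | hne
    · simpa using hη
    · rw [Function.update_of_ne hne]
      rw [hC]
      dsimp only
      split
      · exact hR
      · exact hRc
  have hkey : 0 ≤ ((sitesProd (Function.update C j ((((η:ℝ):ℂ) • 1) - R)) * ρ).trace).re :=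
    trace_mul_re_nonneg _ _ hpsd hρ
  have hlin : η * (((sitesProd (Function.update C j R) * ρ).trace).re
      + ((sitesProd (Function.update C j (1 - R)) * ρ).trace).re)
      = ((sitesProd (Function.update C j ((((η:ℝ):ℂ) • 1) - R)) * ρ).trace).re
        + ((sitesProd (Function.update C j R) * ρ).trace).re := by
    have e1 : ((sitesProd (Function.update C j R) * ρ).trace).re
        + ((sitesProd (Function.update C j (1 - R)) * ρ).trace).re
        = ((sitesProd (Function.update C j 1) * ρ).trace).re := by
      rw [← hsum, Matrix.add_mul, Matrix.trace_add, Complex.add_re]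
    have e2 : ((sitesProd (Function.update C j ((((η:ℝ):ℂ) • 1) - R)) * ρ).trace).re
        + ((sitesProd (Function.update C j R) * ρ).trace).re
        = ((sitesProd (Function.update C j (((η:ℝ):ℂ) • 1)) * ρ).trace).re := by
      rw [hdiff, Matrix.add_mul, Matrix.trace_add, Complex.add_re]
    rw [e1, e2, hsmul, Matrix.smul_mul, Matrix.trace_smul]
    simp [Complex.smul_re]
  linarith

lemma psd_real_smul (M : Matrix (Fin d) (Fin d) ℂ) (hM : M.PosSemidef) (r : ℝ) (hr : 0 ≤ r) :
    (((r:ℝ):ℂ) • M).PosSemidef := by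
  refine Matrix.PosSemidef.of_dotProduct_mulVec_nonneg ?_ ?_
  · simp [Matrix.IsHermitian, Matrix.conjTranspose_smul, Complex.star_def,
      Complex.conj_ofReal, hM.1.eq]
  · intro x
    rw [Matrix.smul_mulVec, dotProduct_smul, smul_eq_mul]
    exact mul_nonneg (by exact_mod_cast Complex.zero_le_real.mpr hr) (hM.dotProduct_mulVec_nonneg x)

lemma q_total (ρ : Matrix (Fin n → Fin d) (Fin n → Fin d) ℂ) (hρtr : ρ.trace = 1)
    (R : Matrix (Fin d) (Fin d) ℂ) :
    (∑ s : Fin n → Bool, ((sitesProd (fun i => if s i then R else 1 - R) * ρ).trace).re) = 1 := by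
  have h : (∑ s : Fin n → Bool,
      sitesProd (fun i => if s i then R else (1:Matrix (Fin d) (Fin d) ℂ) - R)) = 1 := by
    rw [sitesProd_pair_total]
    rw [show R + ((1:Matrix (Fin d) (Fin d) ℂ) - R) = 1 by abel]
    exact sitesProd_one
  rw [← Complex.re_sum, ← Matrix.trace_sum, ← Matrix.sum_mul, h, Matrix.one_mul, hρtr]
  simp

/-- **Similar measurements lead to similar observed frequencies.** If `{P, I−P}` and
`{P′, I−P′}` are binary POVMs with `‖P′ − P‖_∞ ≤ δ`, then for all `e ∈ [0,1]` and `c ≥ 0`,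
`Pr(N_{P′}/n ≥ e + 2δ + c) ≤ Pr(N_P/n ≥ e) + ξ(n, 2δ, c)`. -/
theorem tailProb_close_povm {d n : ℕ}
    (ρ : Matrix (Fin n → Fin d) (Fin n → Fin d) ℂ)
    (hρ : ρ.PosSemidef) (hρtr : ρ.trace = 1)
    (P P' : Matrix (Fin d) (Fin d) ℂ)
    (hP : P.PosSemidef) (hPle : ((1 : Matrix (Fin d) (Fin d) ℂ) - P).PosSemidef)
    (hP' : P'.PosSemidef) (hP'le : ((1 : Matrix (Fin d) (Fin d) ℂ) - P').PosSemidef)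
    (δ : ℝ) (hδ : matOpNorm (P' - P) ≤ δ)
    (e c : ℝ) (he0 : 0 ≤ e) (he1 : e ≤ 1) (hc : 0 ≤ c) :
    tailProb ρ P' (e + 2 * δ + c) ≤ tailProb ρ P e + binTail n (2 * δ) c := by
  classical
  have hδ0 : 0 ≤ δ := le_trans (norm_nonneg _) hδ
  by_cases hcase : 2*δ ≤ 1
  · -- main case
    set X : Matrix (Fin d) (Fin d) ℂ := P' - P with hX
    have hXh : X.IsHermitian := hP'.1.sub hP.1
    set G : Matrix (Fin d) (Fin d) ℂ := ((1-δ:ℝ):ℂ) • P with hG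
    set R : Matrix (Fin d) (Fin d) ℂ := ((δ:ℝ):ℂ) • 1 + ((1-δ:ℝ):ℂ) • X with hR
    have hδ1 : δ ≤ 1 := by linarith
    have habs1 : |1-δ| * δ ≤ δ := by
      rw [abs_of_nonneg (by linarith)]; nlinarith
    have habs2 : |(-(1-δ))| * δ ≤ δ := by rw [abs_neg]; exact habs1
    have habs3 : |(-(1-δ))| * δ ≤ 1 - δ := by
      rw [abs_neg, abs_of_nonneg (by linarith : (0:ℝ) ≤ 1 - δ)]; nlinarith
    have hRpsd : R.PosSemidef := psd_affine X hXh δ δ (1-δ) hδ habs1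
    have h2dR : ((((2*δ):ℝ):ℂ) • (1:Matrix (Fin d) (Fin d) ℂ) - R).PosSemidef := by
      have hid : ((((2*δ):ℝ):ℂ) • (1:Matrix (Fin d) (Fin d) ℂ)) - R
          = ((δ:ℝ):ℂ) • 1 + ((-(1-δ):ℝ):ℂ) • X := by
        rw [hR]; push_cast; module
      rw [hid]; exact psd_affine X hXh δ δ (-(1-δ)) hδ habs2
    have hRc : ((1:Matrix (Fin d) (Fin d) ℂ) - R).PosSemidef := by
      have hid : (1:Matrix (Fin d) (Fin d) ℂ) - R
          = ((1-δ:ℝ):ℂ) • 1 + ((-(1-δ):ℝ):ℂ) • X := by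
        rw [hR]; push_cast; module
      rw [hid]; exact psd_affine X hXh δ (1-δ) (-(1-δ)) hδ habs3
    have hGpsd : G.PosSemidef := psd_real_smul P hP (1-δ) (by linarith)
    -- three-outcome families
    set E1 : Fin 3 → Matrix (Fin d) (Fin d) ℂ := ![P', G + R - P', 1 - (G + R)] with hE1def
    set E2 : Fin 3 → Matrix (Fin d) (Fin d) ℂ := ![G, R, 1 - (G + R)] with hE2def
    set E3 : Fin 3 → Matrix (Fin d) (Fin d) ℂ := ![G, P - G, 1 - P] with hE3def
    have id1 : G + R - P' = ((δ:ℝ):ℂ) • ((1:Matrix (Fin d) (Fin d) ℂ) - P') := by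
      rw [hG, hR, hX]; push_cast; module
    have id2 : (1:Matrix (Fin d) (Fin d) ℂ) - (G + R) = ((1-δ:ℝ):ℂ) • ((1:Matrix (Fin d) (Fin d) ℂ) - P') := by
      rw [hG, hR, hX]; push_cast; module
    have id4 : P - G = ((δ:ℝ):ℂ) • P := by rw [hG]; push_cast; module
    have hE1 : ∀ j, (E1 j).PosSemidef := by
      intro j; fin_cases j
      · exact hP'
      · show (E1 1).PosSemidef
        rw [hE1def]
        simp only [Matrix.cons_val_one, Matrix.head_cons]
        rw [id1]; exact psd_real_smul _ hP'le δ hδ0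
      · show (E1 2).PosSemidef
        rw [hE1def]
        simp only [Matrix.cons_val_two, Matrix.tail_cons, Matrix.head_cons]
        rw [id2]; exact psd_real_smul _ hP'le (1-δ) (by linarith)
    have hE2 : ∀ j, (E2 j).PosSemidef := by
      intro j; fin_cases j
      · exact hGpsd
      · exact hRpsd
      · show (E2 2).PosSemidef
        rw [hE2def]
        simp only [Matrix.cons_val_two, Matrix.tail_cons, Matrix.head_cons]
        rw [id2]; exact psd_real_smul _ hP'le (1-δ) (by linarith)
    have hE3 : ∀ j, (E3 j).PosSemidef := by
      intro j; fin_cases j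
      · exact hGpsd
      · show (E3 1).PosSemidef
        rw [hE3def]
        simp only [Matrix.cons_val_one, Matrix.head_cons]
        rw [id4]; exact psd_real_smul _ hP δ hδ0
      · exact hPle
    -- grouping functions
    set g1 : Fin 3 → Bool := ![true, false, false] with hg1
    set g2 : Fin 3 → Bool := ![true, true, false] with hg2
    set gR : Fin 3 → Bool := ![false, true, false] with hgR
    -- sum computations
    have hB11 : ∀ b : Bool, (∑ j ∈ Finset.univ.filter (fun j => g1 j = b), E1 j)
        = (if b then P' else 1 - P') := by
      intro b; cases b <;>
        · rw [Finset.sum_filter, Fin.sum_univ_three]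
          simp [hg1, hE1def]
          try abel
    have hB12 : ∀ b : Bool, (∑ j ∈ Finset.univ.filter (fun j => g2 j = b), E1 j)
        = (if b then G + R else 1 - (G + R)) := by
      intro b; cases b <;>
        · rw [Finset.sum_filter, Fin.sum_univ_three]
          simp [hg2, hE1def]
          try abel
    have hB22 : ∀ b : Bool, (∑ j ∈ Finset.univ.filter (fun j => g2 j = b), E2 j)
        = (if b then G + R else 1 - (G + R)) := by
      intro b; cases b <;>
        · rw [Finset.sum_filter, Fin.sum_univ_three]
          simp [hg2, hE2def]
          try abel
    have hB21 : ∀ b : Bool, (∑ j ∈ Finset.univ.filter (fun j => g1 j = b), E2 j)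
        = (if b then G else 1 - G) := by
      intro b; cases b <;>
        · rw [Finset.sum_filter, Fin.sum_univ_three]
          simp [hg1, hE2def]
          try abel
    have hB2R : ∀ b : Bool, (∑ j ∈ Finset.univ.filter (fun j => gR j = b), E2 j)
        = (if b then R else 1 - R) := by
      intro b; cases b <;>
        · rw [Finset.sum_filter, Fin.sum_univ_three]
          simp [hgR, hE2def]
          try abel
    have hB31 : ∀ b : Bool, (∑ j ∈ Finset.univ.filter (fun j => g1 j = b), E3 j)
        = (if b then G else 1 - G) := by
      intro b; cases b <;>
        · rw [Finset.sum_filter, Fin.sum_univ_three]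
          simp [hg1, hE3def]
          try abel
    have hB32 : ∀ b : Bool, (∑ j ∈ Finset.univ.filter (fun j => g2 j = b), E3 j)
        = (if b then P else 1 - P) := by
      intro b; cases b <;>
        · rw [Finset.sum_filter, Fin.sum_univ_three]
          simp [hg2, hE3def]
          try abel
    -- the chain
    have step0 : tailProb ρ P' (e + 2*δ + c)
        = ∑ s : Fin n → Bool, if (e + 2*δ + c) * n ≤ ((Finset.univ.filter fun i => s i = true).card : ℝ)
            then ((sitesProd (fun i => if s i then P' else 1 - P') * ρ).trace).re else 0 := rfl
    have step1 : tailProb ρ P' (e + 2*δ + c)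
        ≤ ∑ s : Fin n → Bool, if (e + 2*δ + c) * n ≤ ((Finset.univ.filter fun i => s i = true).card : ℝ)
            then ((sitesProd (fun i => if s i then G + R else 1 - (G + R)) * ρ).trace).re else 0 := by
      rw [step0, bool_to3 ρ E1 g1 P' (1 - P') hB11 _, bool_to3 ρ E1 g2 (G + R) (1 - (G + R)) hB12 _]
      exact count_mono_tail ρ hρ E1 hE1 g1 g2 (by rw [hg1, hg2]; decide) _
    have step2 :
        (∑ s : Fin n → Bool, if (e + 2*δ + c) * n ≤ ((Finset.univ.filter fun i => s i = true).card : ℝ)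
            then ((sitesProd (fun i => if s i then G + R else 1 - (G + R)) * ρ).trace).re else 0)
        ≤ (∑ s : Fin n → Bool, if e * n ≤ ((Finset.univ.filter fun i => s i = true).card : ℝ)
            then ((sitesProd (fun i => if s i then G else 1 - G) * ρ).trace).re else 0)
          + ∑ s : Fin n → Bool, if (n:ℝ) * (2*δ + c) ≤ ((Finset.univ.filter fun i => s i = true).card : ℝ)
            then ((sitesProd (fun i => if s i then R else 1 - R) * ρ).trace).re else 0 := by
      rw [bool_to3 ρ E2 g2 (G + R) (1 - (G + R)) hB22 _,
        bool_to3 ρ E2 g1 G (1 - G) hB21 _,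
        bool_to3 ρ E2 gR R (1 - R) hB2R _]
      have harith : (e + 2*δ + c) * (n:ℝ) = e * n + (n:ℝ) * (2*δ + c) := by ring
      rw [harith]
      rw [hg1, hg2, hgR]
      exact split_tail ρ hρ E2 hE2 (e * n) ((n:ℝ) * (2*δ + c))
    have step3 :
        (∑ s : Fin n → Bool, if e * n ≤ ((Finset.univ.filter fun i => s i = true).card : ℝ)
            then ((sitesProd (fun i => if s i then G else 1 - G) * ρ).trace).re else 0)
        ≤ tailProb ρ P e := by
      have hPe : tailProb ρ P e
          = ∑ s : Fin n → Bool, if e * n ≤ ((Finset.univ.filter fun i => s i = true).card : ℝ)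
              then ((sitesProd (fun i => if s i then P else 1 - P) * ρ).trace).re else 0 := rfl
      rw [hPe, bool_to3 ρ E3 g1 G (1 - G) hB31 _, bool_to3 ρ E3 g2 P (1 - P) hB32 _]
      exact count_mono_tail ρ hρ E3 hE3 g1 g2 (by rw [hg1, hg2]; decide) _
    have step4 :
        (∑ s : Fin n → Bool, if (n:ℝ) * (2*δ + c) ≤ ((Finset.univ.filter fun i => s i = true).card : ℝ)
            then ((sitesProd (fun i => if s i then R else 1 - R) * ρ).trace).re else 0)
        ≤ binTail n (2*δ) c := by
      have hq0 : ∀ s : Fin n → Bool,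
          0 ≤ ((sitesProd (fun i => if s i then R else 1 - R) * ρ).trace).re := by
        intro s
        refine trace_mul_re_nonneg _ _ (sitesProd_psd _ fun i => ?_) hρ
        split
        · exact hRpsd
        · exact hRc
      have hA : ∀ (j : Fin n) (s : Fin n → Bool),
          ((sitesProd (fun i => if (Function.update s j true) i then R else 1 - R) * ρ).trace).re
          ≤ (2*δ) * (((sitesProd (fun i => if (Function.update s j true) i then R else 1 - R) * ρ).trace).re
              + ((sitesProd (fun i => if (Function.update s j false) i then R else 1 - R) * ρ).trace).re) :=
        fun j s => condA ρ hρ R hRpsd hRc (2*δ) h2dR j s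
      have hbd := binDom n (fun s => ((sitesProd (fun i => if s i then R else 1 - R) * ρ).trace).re)
        (2*δ) (by linarith) hcase hq0 hA ((n:ℝ) * (2*δ + c))
      rw [q_total ρ hρtr R, one_mul] at hbd
      have hfin : binT n (2*δ) ((n:ℝ) * (2*δ + c)) = binTail n (2*δ) c := rfl
      rw [hfin] at hbd
      exact hbd
    linarith
  · -- trivial case : 1 < 2δ
    push_neg at hcase
    have hq0 : ∀ (Q : Matrix (Fin d) (Fin d) ℂ), Q.PosSemidef →
        ((1:Matrix (Fin d) (Fin d) ℂ) - Q).PosSemidef →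
        ∀ e' : ℝ, 0 ≤ tailProb ρ Q e' := by
      intro Q hQ hQc e'
      refine Finset.sum_nonneg fun s _ => ?_
      split
      · refine trace_mul_re_nonneg _ _ (sitesProd_psd _ fun i => ?_) hρ
        split
        · exact hQ
        · exact hQc
      · exact le_refl 0
    rcases Nat.eq_zero_or_pos n with hn0 | hnpos
    · subst hn0
      have htp : ∀ (Q : Matrix (Fin d) (Fin d) ℂ) (e' : ℝ), tailProb ρ Q e' = 1 := by
        intro Q e'
        have h1 : ∀ s : Fin 0 → Bool, povmProd Q s = 1 := by
          intro s
          have h2 : povmProd Q s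
              = sitesProd (fun _ : Fin 0 => (1 : Matrix (Fin d) (Fin d) ℂ)) := by
            apply congrArg Matrix.of
            funext x y
            exact Finset.prod_congr rfl fun i _ => i.elim0
          rw [h2, sitesProd_one]
        have h3 : ∀ s : Fin 0 → Bool,
            (if e' * ((0:ℕ):ℝ) ≤ ((Finset.univ.filter fun i => s i = true).card : ℝ)
              then ((povmProd Q s * ρ).trace).re else 0) = 1 := by
          intro s
          rw [h1 s, Matrix.one_mul, hρtr, if_pos]
          · simp
          · rw [Nat.cast_zero, mul_zero]
            positivity
        rw [tailProb]
        calc (∑ s : Fin 0 → Bool,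
              if e' * ((0:ℕ):ℝ) ≤ ((Finset.univ.filter fun i => s i = true).card : ℝ)
              then ((povmProd Q s * ρ).trace).re else 0)
            = ∑ _s : Fin 0 → Bool, (1:ℝ) := Finset.sum_congr rfl (fun s _ => h3 s)
          _ = 1 := by simp
      have hbt : binTail 0 (2*δ) c = 1 := by
        rw [binTail]
        rw [show (Finset.range 1).filter (fun i : ℕ => ((0:ℕ):ℝ) * (2*δ + c) ≤ (i:ℝ)) = {0} by
          ext i; simp [Finset.mem_filter, Finset.mem_range]; try omega]
        simp
      rw [htp P' _, htp P _, hbt]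
      linarith
    · have hLHS : tailProb ρ P' (e + 2*δ + c) = 0 := by
        refine Finset.sum_eq_zero fun s _ => ?_
        rw [if_neg]
        intro habs
        have hcard : ((Finset.univ.filter fun i => s i = true).card : ℝ) ≤ (n:ℝ) := by
          exact_mod_cast le_trans (Finset.card_filter_le _ _) (le_of_eq (by simp))
        have hn1 : (1:ℝ) ≤ (n:ℝ) := by exact_mod_cast hnpos
        nlinarith
      have hbt : binTail n (2*δ) c = 0 := by
        rw [binTail]
        rw [Finset.filter_false_of_mem, Finset.sum_empty]
        intro i hi
        rw [Finset.mem_range] at hi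
        have hi' : (i:ℝ) ≤ (n:ℝ) := by exact_mod_cast Nat.lt_succ_iff.mp hi
        have hn1 : (1:ℝ) ≤ (n:ℝ) := by exact_mod_cast hnpos
        intro habs
        nlinarith
      rw [hLHS, hbt]
      have := hq0 P hP hPle e
      linarith
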